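/- Let k ≥ 2 be an integer and let (a_m)_{m≥1} be complex numbers with Σ_{m≥1} |a_m| r^m < ∞ for every 0 < r < 1. Define f(τ) = Σ_{m≥1} a_m e^{2πimτ} and f̃_∞(τ) = Σ_{m≥1} (a_m / m^{k−1}) e^{2πimτ} for τ ∈ ℍ. Then for every τ₀ ∈ ℍ and every τ ∈ ℍ, f̃_∞(τ) − f̃_{τ₀}(τ) = ((2πi)^{k−1}/(k−1)!) · ∫_{τ₀}^{τ₀−1} B_{k−1}(τ − z) f(z) dz, where B_{k−1} is the (k−1)-st Bernoulli polynomial and the integral is along any path in ℍ. -/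

import Mathlib

open Complex Polynomial MeasureTheory

/-- The integral of `g` along the straight segment from `z₀` to `z₁`. -/
noncomputable def segInt (g : ℂ → ℂ) (z₀ z₁ : ℂ) : ℂ :=
  ∫ t in (0:ℝ)..1, g (z₀ + (t : ℂ) * (z₁ - z₀)) * (z₁ - z₀)

/-- The Eichler integral `f̃_{τ₀}(τ) = ((2πi)^{k−1}/(k−2)!) ∫_{τ₀}^{τ} (τ−z)^{k−2} f(z) dz`. -/
noncomputable def eichler (k : ℕ) (f : ℂ → ℂ) (τ₀ τ : ℂ) : ℂ :=
  (2 * (Real.pi : ℂ) * Complex.I) ^ (k - 1) / (Nat.factorial (k - 2) : ℂ) *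
    segInt (fun z => (τ - z) ^ (k - 2) * f z) τ₀ τ

noncomputable def Qp (w : ℂ) (N : ℕ) (P : ℂ[X]) : ℂ[X] :=
  ∑ i ∈ Finset.range N, Polynomial.C ((w ^ (i+1))⁻¹) * derivative^[i] P

lemma Qp_spec {w : ℂ} (hw : w ≠ 0) {N : ℕ} {P : ℂ[X]} (hP : derivative^[N] P = 0) :
    Polynomial.C w * Qp w N P - derivative (Qp w N P) = P := by
  unfold Qp
  rw [Finset.mul_sum, map_sum]
  have h1 : ∀ i ∈ Finset.range N,
      Polynomial.C w * (Polynomial.C ((w ^ (i+1))⁻¹) * derivative^[i] P)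
        = Polynomial.C ((w ^ i)⁻¹) * derivative^[i] P := by
    intro i _
    rw [← mul_assoc, ← map_mul]
    congr 2
    field_simp
    ring
  have h2 : ∀ i ∈ Finset.range N,
      derivative (Polynomial.C ((w ^ (i+1))⁻¹) * derivative^[i] P)
        = Polynomial.C ((w ^ (i+1))⁻¹) * derivative^[i+1] P := by
    intro i _
    rw [derivative_C_mul, Function.iterate_succ_apply']
  rw [Finset.sum_congr rfl h1, Finset.sum_congr rfl h2, ← Finset.sum_sub_distrib]
  have := Finset.sum_range_sub' (fun i => Polynomial.C ((w ^ i)⁻¹) * derivative^[i] P) N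
  simp only [pow_zero, inv_one, map_one, one_mul, Function.iterate_zero_apply] at this ⊢
  rw [this, hP, mul_zero, sub_zero]

lemma segInt_eq_sub {g G : ℂ → ℂ} (hG : ∀ z, HasDerivAt G (g z) z) (hg : Continuous g)
    (z₀ z₁ : ℂ) : segInt g z₀ z₁ = G z₁ - G z₀ := by
  have key : ∀ t ∈ Set.uIcc (0:ℝ) 1,
      HasDerivAt (fun s : ℝ => G (z₀ + (s:ℂ) * (z₁ - z₀)))
        (g (z₀ + (t:ℂ) * (z₁ - z₀)) * (z₁ - z₀)) t := by
    intro t _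
    have h1 : HasDerivAt (fun s : ℝ => z₀ + (s:ℂ) * (z₁ - z₀)) (z₁ - z₀) t := by
      simpa using (((hasDerivAt_id ((t:ℝ):ℂ)).mul_const (z₁ - z₀)).const_add z₀).comp_ofReal
    exact (hG _).comp t h1
  have hcont : IntervalIntegrable
      (fun t : ℝ => g (z₀ + (t:ℂ) * (z₁ - z₀)) * (z₁ - z₀)) volume 0 1 := by
    apply Continuous.intervalIntegrable
    exact (hg.comp (by continuity)).mul continuous_const
  have := intervalIntegral.integral_eq_sub_of_hasDerivAt key hcont
  simpa [segInt] using this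

lemma segInt_poly_exp (P : ℂ[X]) {w : ℂ} (hw : w ≠ 0) {N : ℕ} (hP : derivative^[N] P = 0)
    (τ z₀ z₁ : ℂ) :
    segInt (fun z => P.eval (τ - z) * Complex.exp (w * z)) z₀ z₁
      = (Qp w N P).eval (τ - z₁) * Complex.exp (w * z₁)
        - (Qp w N P).eval (τ - z₀) * Complex.exp (w * z₀) := by
  apply segInt_eq_sub (G := fun z => (Qp w N P).eval (τ - z) * Complex.exp (w * z))
  · intro z
    have h1 : HasDerivAt (fun z : ℂ => (Qp w N P).eval (τ - z))
        (-(derivative (Qp w N P)).eval (τ - z)) z := by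
      have := ((Qp w N P).hasDerivAt (τ - z)).comp z
        (((hasDerivAt_id z).const_sub τ))
      rw [mul_neg_one] at this
      exact this
    have h2 : HasDerivAt (fun z : ℂ => Complex.exp (w * z)) (w * Complex.exp (w * z)) z := by
      simpa [mul_comm] using ((hasDerivAt_id z).const_mul w).cexp
    have h3 := h1.mul h2
    refine h3.congr_deriv ?_
    have h4 := congrArg (Polynomial.eval (τ - z)) (Qp_spec hw hP)
    simp only [Polynomial.eval_sub, Polynomial.eval_mul, Polynomial.eval_C] at h4
    rw [← h4]; ring
  · have : Continuous fun z : ℂ => P.eval (τ - z) :=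
      P.continuous.comp (continuous_const.sub continuous_id)
    exact this.mul ((Complex.continuous_exp.comp (continuous_const.mul continuous_id)))

lemma segInt_hasSum {F : ℕ → ℂ → ℂ} (z₀ z₁ : ℂ) (hF : ∀ m, Continuous (F m))
    {c : ℕ → ℝ} (hc : Summable c)
    (hbound : ∀ (m : ℕ) (t : ℝ), t ∈ Set.Icc (0:ℝ) 1 →
      ‖F m (z₀ + (t:ℂ) * (z₁ - z₀))‖ ≤ c m) :
    HasSum (fun m => segInt (F m) z₀ z₁) (segInt (fun z => ∑' m, F m z) z₀ z₁) := by
  set μ : Measure ℝ := volume.restrict (Set.Ioc (0:ℝ) 1)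
  set G : ℕ → ℝ → ℂ := fun m t => F m (z₀ + (t:ℂ) * (z₁ - z₀)) * (z₁ - z₀) with hG
  have hGc : ∀ m, Continuous (G m) := fun m =>
    ((hF m).comp (by continuity)).mul continuous_const
  have hint : ∀ m, Integrable (G m) μ := fun m =>
    ((hGc m).continuousOn.integrableOn_compact isCompact_Icc).mono_set Set.Ioc_subset_Icc_self
  have hbnd : ∀ m, ∫ t, ‖G m t‖ ∂μ ≤ c m * ‖z₁ - z₀‖ := by
    intro m
    have h1 : ∫ t, ‖G m t‖ ∂μ ≤ ∫ _ in Set.Ioc (0:ℝ) 1, (c m * ‖z₁ - z₀‖) := by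
      apply setIntegral_mono_on (hint m).norm (integrable_const _) measurableSet_Ioc
      intro t ht
      rw [hG]
      calc ‖F m (z₀ + (t:ℂ) * (z₁ - z₀)) * (z₁ - z₀)‖
          = ‖F m (z₀ + (t:ℂ) * (z₁ - z₀))‖ * ‖z₁ - z₀‖ := norm_mul _ _
        _ ≤ c m * ‖z₁ - z₀‖ :=
            mul_le_mul_of_nonneg_right (hbound m t (Set.Ioc_subset_Icc_self ht)) (norm_nonneg _)
    simpa using h1
  have hsum : Summable fun m => ∫ t, ‖G m t‖ ∂μ := by
    apply Summable.of_nonneg_of_le (fun m => integral_nonneg fun t => norm_nonneg _) hbnd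
    exact hc.mul_right _
  have key := MeasureTheory.hasSum_integral_of_summable_integral_norm hint hsum
  have e1 : segInt (fun z => ∑' m, F m z) z₀ z₁ = ∫ t, ∑' m, G m t ∂μ := by
    rw [segInt, intervalIntegral.integral_of_le zero_le_one]
    congr 1
    ext t
    rw [hG]
    exact (tsum_mul_right).symm
  have e2 : ∀ m, segInt (F m) z₀ z₁ = ∫ t, G m t ∂μ := fun m => by
    rw [segInt, intervalIntegral.integral_of_le zero_le_one]
  rw [e1]
  simpa [e2] using key

lemma Qp_eval (w : ℂ) (N : ℕ) (P : ℂ[X]) (u : ℂ) :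
    (Qp w N P).eval u
      = ∑ i ∈ Finset.range N, (w ^ (i+1))⁻¹ * (derivative^[i] P).eval u := by
  simp [Qp, Polynomial.eval_finset_sum]

lemma segInt_const_mul (c : ℂ) (g : ℂ → ℂ) (z₀ z₁ : ℂ) :
    segInt (fun z => c * g z) z₀ z₁ = c * segInt g z₀ z₁ := by
  simp only [segInt, mul_assoc, intervalIntegral.integral_const_mul]

lemma Qp_eval_zero (n : ℕ) (w : ℂ) :
    (Qp w (n+1) ((Polynomial.X : ℂ[X]) ^ n)).eval 0
      = (n.factorial : ℂ) * (w ^ (n+1))⁻¹ := by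
  rw [Qp_eval, Finset.sum_eq_single n]
  · rw [iterate_derivative_X_pow_eq_natCast_mul, Nat.sub_self, Nat.descFactorial_self]
    simp [mul_comm]
  · intro i hi hne
    rw [iterate_derivative_X_pow_eq_natCast_mul]
    have : 0 < n - i := by
      simp only [Finset.mem_range] at hi; omega
    simp [zero_pow (by omega : n - i ≠ 0)]
  · intro h
    exact absurd (Finset.self_mem_range_succ n) h

lemma norm_exp_w_le {z : ℂ} {δ : ℝ} (hδ : δ ≤ z.im) (m : ℕ) :
    ‖Complex.exp (2*(Real.pi:ℂ)*Complex.I*((m:ℂ)+1) * z)‖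
      ≤ Real.exp (-(2*Real.pi*δ)) ^ (m+1) := by
  have hre : (2*(Real.pi:ℂ)*Complex.I*((m:ℂ)+1) * z).re
      = ((m+1 : ℕ) : ℝ) * (-(2*Real.pi*z.im)) := by
    simp [Complex.mul_re, Complex.mul_im]
    ring
  rw [Complex.norm_exp, hre, Real.exp_nat_mul]
  exact pow_le_pow_left₀ (Real.exp_nonneg _)
    (Real.exp_le_exp.2 (by nlinarith [Real.pi_pos])) _

lemma iterate_derivative_bernoulli (i n : ℕ) :
    derivative^[i] (Polynomial.bernoulli n)
      = (n.descFactorial i : ℚ[X]) * Polynomial.bernoulli (n - i) := by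
  induction i generalizing n with
  | zero => simp
  | succ i ih =>
    rw [Function.iterate_succ_apply, Polynomial.derivative_bernoulli,
      iterate_derivative_natCast_mul, ih]
    cases n with
    | zero => simp
    | succ n =>
      rw [Nat.succ_sub_one, Nat.succ_descFactorial_succ, Nat.succ_sub_succ]
      push_cast
      ring

lemma bernoulli_comp_one_add (n : ℕ) :
    (Polynomial.bernoulli n).comp (1 + Polynomial.X)
      = Polynomial.bernoulli n + (n : ℚ[X]) * Polynomial.X ^ (n - 1) :=
  Polynomial.funext fun x => by
    simp [Polynomial.eval_comp, Polynomial.bernoulli_eval_one_add]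

lemma aeval_bernoulli_add_one (n : ℕ) (x : ℂ) :
    Polynomial.aeval (x + 1) (Polynomial.bernoulli n)
      = Polynomial.aeval x (Polynomial.bernoulli n) + n * x ^ (n - 1) := by
  have h := congrArg (Polynomial.aeval (R := ℚ) x) (bernoulli_comp_one_add n)
  rw [Polynomial.aeval_comp] at h
  simpa [add_comm] using h

lemma eval_iter_deriv_bernoulli_map (j i : ℕ) (u : ℂ) :
    (derivative^[i] ((Polynomial.bernoulli j).map (algebraMap ℚ ℂ))).eval u
      = (j.descFactorial i : ℂ) * Polynomial.aeval u (Polynomial.bernoulli (j - i)) := by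
  rw [Polynomial.iterate_derivative_map, iterate_derivative_bernoulli]
  simp [Polynomial.eval_map, Polynomial.aeval_def]

lemma key_identity (n : ℕ) (w x : ℂ) :
    (Qp w (n+2) ((Polynomial.bernoulli (n+1)).map (algebraMap ℚ ℂ))).eval (x+1)
      - (Qp w (n+2) ((Polynomial.bernoulli (n+1)).map (algebraMap ℚ ℂ))).eval x
    = ((n+1 : ℕ) : ℂ) * (Qp w (n+1) ((Polynomial.X : ℂ[X]) ^ n)).eval x := by
  rw [Qp_eval, Qp_eval, Qp_eval, ← Finset.sum_sub_distrib, Finset.mul_sum]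
  rw [Finset.sum_range_succ]
  have hlast : (w ^ (n+1+1))⁻¹ *
      (derivative^[n+1] ((Polynomial.bernoulli (n+1)).map (algebraMap ℚ ℂ))).eval (x+1)
      - (w ^ (n+1+1))⁻¹ *
      (derivative^[n+1] ((Polynomial.bernoulli (n+1)).map (algebraMap ℚ ℂ))).eval x = 0 := by
    rw [eval_iter_deriv_bernoulli_map, eval_iter_deriv_bernoulli_map, Nat.sub_self,
      Polynomial.bernoulli_zero]
    simp
  rw [hlast, add_zero]
  refine Finset.sum_congr rfl fun i hi => ?_
  rw [eval_iter_deriv_bernoulli_map, eval_iter_deriv_bernoulli_map,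
    aeval_bernoulli_add_one, iterate_derivative_X_pow_eq_natCast_mul]
  rw [show n + 1 - i - 1 = n - i from by omega]
  simp only [Polynomial.eval_mul, Polynomial.eval_pow, Polynomial.eval_X,
    Polynomial.eval_natCast]
  have hnat : (n+1).descFactorial i * (n+1-i) = (n+1) * n.descFactorial i := by
    rw [mul_comm, ← Nat.descFactorial_succ, Nat.succ_descFactorial_succ]
  have hcast : ((n+1).descFactorial i : ℂ) * ((n+1-i : ℕ) : ℂ)
      = ((n+1 : ℕ) : ℂ) * (n.descFactorial i : ℂ) := by exact_mod_cast hnat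
  linear_combination ((w ^ (i+1))⁻¹ * x ^ (n-i)) * hcast

lemma mode_alg {p μ fc s : ℂ} (q Eτ E₀ A : ℂ) (hp : p ≠ 0) (hμ : μ ≠ 0) (hf : fc ≠ 0)
    (hs : s ≠ 0) (N : ℕ) :
    A / μ^(N+1) * Eτ - p^(N+1) / fc * (A * ((fc * (p^(N+1) * μ^(N+1))⁻¹) * Eτ - q * E₀))
      = p^(N+1) / (s * fc) * (A * (s * q * E₀)) := by
  have hpN : p^(N+1) ≠ 0 := pow_ne_zero _ hp
  have hμN : μ^(N+1) ≠ 0 := pow_ne_zero _ hμ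
  have e1 : p^(N+1) / fc * (fc * (p^(N+1) * μ^(N+1))⁻¹) = (μ^(N+1))⁻¹ := by
    rw [mul_inv]
    field_simp
  have e2 : p^(N+1) / (s * fc) * s = p^(N+1) / fc := by field_simp
  calc A / μ^(N+1) * Eτ - p^(N+1) / fc * (A * ((fc * (p^(N+1) * μ^(N+1))⁻¹) * Eτ - q * E₀))
      = A * Eτ * (μ^(N+1))⁻¹ - A * Eτ * (p^(N+1) / fc * (fc * (p^(N+1) * μ^(N+1))⁻¹))
          + p^(N+1) / fc * (A * (q * E₀)) := by ring
    _ = p^(N+1) / fc * (A * (q * E₀)) := by rw [e1]; ring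
    _ = p^(N+1) / (s * fc) * s * (A * (q * E₀)) := by rw [e2]
    _ = p^(N+1) / (s * fc) * (A * (s * q * E₀)) := by ring

theorem eichler_infty_sub_eichler_basepoint (k : ℕ) (hk : 2 ≤ k) (a : ℕ → ℂ)
    (hsum : ∀ r : ℝ, 0 < r → r < 1 → Summable (fun m : ℕ => ‖a (m + 1)‖ * r ^ (m + 1)))
    (f fe : ℂ → ℂ)
    (hf : ∀ τ : ℂ, f τ =
      ∑' m : ℕ, a (m + 1) * Complex.exp (2 * (Real.pi : ℂ) * Complex.I * ((m : ℂ) + 1) * τ))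
    (hfe : ∀ τ : ℂ, fe τ =
      ∑' m : ℕ, a (m + 1) / ((m : ℂ) + 1) ^ (k - 1) *
        Complex.exp (2 * (Real.pi : ℂ) * Complex.I * ((m : ℂ) + 1) * τ)) :
    ∀ τ₀ τ : ℂ, 0 < τ₀.im → 0 < τ.im →
      fe τ - eichler k f τ₀ τ
        = (2 * (Real.pi : ℂ) * Complex.I) ^ (k - 1) / (Nat.factorial (k - 1) : ℂ) *
            segInt (fun z => Polynomial.aeval (τ - z) (Polynomial.bernoulli (k - 1)) * f z)
              τ₀ (τ₀ - 1) := by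
  obtain ⟨n, rfl⟩ : ∃ n, k = n + 2 := ⟨k - 2, by omega⟩
  intro τ₀ τ h₀ hτ
  simp only [show n+2-1 = n+1 from rfl, show n+2-2 = n from rfl] at hfe ⊢
  -- abbreviations
  set P₁ : ℂ[X] := (Polynomial.X : ℂ[X]) ^ n with hP₁_def
  set P₂ : ℂ[X] := (Polynomial.bernoulli (n+1)).map (algebraMap ℚ ℂ) with hP₂_def
  have hP₁ : derivative^[n+1] P₁ = 0 := by
    rw [hP₁_def, iterate_derivative_X_pow_eq_natCast_mul,
      Nat.descFactorial_eq_zero_iff_lt.2 (Nat.lt_succ_self n)]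
    simp
  have hP₂ : derivative^[n+2] P₂ = 0 := by
    rw [hP₂_def, Polynomial.iterate_derivative_map, iterate_derivative_bernoulli,
      Nat.descFactorial_eq_zero_iff_lt.2 (by omega : n+1 < n+2)]
    simp
  have hP₂eval : ∀ u : ℂ, Polynomial.aeval u (Polynomial.bernoulli (n+1)) = P₂.eval u := by
    intro u; rw [hP₂_def]; simp [Polynomial.eval_map, Polynomial.aeval_def]
  have hwm : ∀ m : ℕ, (2*(Real.pi:ℂ)*Complex.I*((m:ℂ)+1)) ≠ 0 := by
    intro m
    refine mul_ne_zero (mul_ne_zero (mul_ne_zero two_ne_zero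
      (Complex.ofReal_ne_zero.2 Real.pi_ne_zero)) Complex.I_ne_zero) ?_
    exact_mod_cast Nat.succ_ne_zero m
  -- radius
  set δ : ℝ := min τ₀.im τ.im with hδ_def
  have hδpos : 0 < δ := lt_min h₀ hτ
  set r : ℝ := Real.exp (-(2*Real.pi*δ)) with hr_def
  have hr0 : 0 < r := Real.exp_pos _
  have hr1 : r < 1 := by
    rw [hr_def, Real.exp_lt_one_iff]
    nlinarith [Real.pi_pos]
  have hsum_r : Summable (fun m : ℕ => ‖a (m+1)‖ * r ^ (m+1)) := hsum r hr0 hr1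
  -- the summand families
  set F₁ : ℕ → ℂ → ℂ := fun m z =>
    a (m+1) * ((τ - z) ^ n * Complex.exp (2*(Real.pi:ℂ)*Complex.I*((m:ℂ)+1) * z)) with hF₁_def
  set F₂ : ℕ → ℂ → ℂ := fun m z =>
    a (m+1) * (P₂.eval (τ - z) * Complex.exp (2*(Real.pi:ℂ)*Complex.I*((m:ℂ)+1) * z)) with hF₂_def
  have hcont_exp : ∀ m : ℕ,
      Continuous fun z : ℂ => Complex.exp (2*(Real.pi:ℂ)*Complex.I*((m:ℂ)+1) * z) :=
    fun m => Complex.continuous_exp.comp (continuous_const.mul continuous_id)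
  have hF₁c : ∀ m, Continuous (F₁ m) := fun m => continuous_const.mul
    (((continuous_const.sub continuous_id).pow n).mul (hcont_exp m))
  have hF₂c : ∀ m, Continuous (F₂ m) := fun m => continuous_const.mul
    ((P₂.continuous.comp (continuous_const.sub continuous_id)).mul (hcont_exp m))
  -- bound along the segment τ₀ → τ
  have hb₁ : ∀ (m : ℕ) (t : ℝ), t ∈ Set.Icc (0:ℝ) 1 →
      ‖F₁ m (τ₀ + (t:ℂ) * (τ - τ₀))‖ ≤ ‖τ - τ₀‖^n * (‖a (m+1)‖ * r ^ (m+1)) := by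
    intro m t ht
    have him : δ ≤ (τ₀ + (t:ℂ) * (τ - τ₀)).im := by
      have h1 : (τ₀ + (t:ℂ) * (τ - τ₀)).im = τ₀.im + t * (τ.im - τ₀.im) := by
        simp [Complex.add_im, Complex.mul_im]
      rw [h1, hδ_def]
      rcases le_total τ₀.im τ.im with h | h
      · nlinarith [ht.1, ht.2, min_le_left τ₀.im τ.im]
      · nlinarith [ht.1, ht.2, min_le_right τ₀.im τ.im]
    have hzz : τ - (τ₀ + (t:ℂ) * (τ - τ₀)) = ((1-t : ℝ):ℂ) * (τ - τ₀) := by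
      push_cast; ring
    rw [hF₁_def]
    simp only [norm_mul, norm_pow]
    have h2 : ‖τ - (τ₀ + (t:ℂ) * (τ - τ₀))‖ ≤ ‖τ - τ₀‖ := by
      rw [hzz, norm_mul, Complex.norm_real, Real.norm_eq_abs]
      have : |1 - t| ≤ 1 := by rw [abs_le]; constructor <;> nlinarith [ht.1, ht.2]
      nlinarith [norm_nonneg (τ - τ₀), this, abs_nonneg (1-t)]
    have h3 := norm_exp_w_le him m
    calc ‖a (m+1)‖ * (‖τ - (τ₀ + (t:ℂ) * (τ - τ₀))‖^n *
          ‖Complex.exp (2*(Real.pi:ℂ)*Complex.I*((m:ℂ)+1) * (τ₀ + (t:ℂ) * (τ - τ₀)))‖)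
        ≤ ‖a (m+1)‖ * (‖τ - τ₀‖^n * r^(m+1)) := by
          apply mul_le_mul_of_nonneg_left _ (norm_nonneg _)
          apply mul_le_mul (pow_le_pow_left₀ (norm_nonneg _) h2 n) h3 (norm_nonneg _)
            (pow_nonneg (norm_nonneg _) n)
      _ = ‖τ - τ₀‖^n * (‖a (m+1)‖ * r^(m+1)) := by ring
  -- bound along the segment τ₀ → τ₀ - 1
  obtain ⟨M, hM⟩ := (isCompact_Icc (a := (0:ℝ)) (b := 1)).exists_bound_of_continuousOn
    (f := fun t : ℝ => P₂.eval (τ - (τ₀ + (t:ℂ) * ((τ₀-1) - τ₀))))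
    ((P₂.continuous.comp (continuous_const.sub (by continuity))).continuousOn)
  have hb₂ : ∀ (m : ℕ) (t : ℝ), t ∈ Set.Icc (0:ℝ) 1 →
      ‖F₂ m (τ₀ + (t:ℂ) * ((τ₀-1) - τ₀))‖ ≤ M * (‖a (m+1)‖ * r ^ (m+1)) := by
    intro m t ht
    have him : δ ≤ (τ₀ + (t:ℂ) * ((τ₀-1) - τ₀)).im := by
      have h1 : (τ₀ + (t:ℂ) * ((τ₀-1) - τ₀)).im = τ₀.im := by
        have : (τ₀-1) - τ₀ = (-1 : ℂ) := by ring
        rw [this]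
        simp [Complex.add_im, Complex.mul_im]
      rw [h1, hδ_def]
      exact min_le_left _ _
    have h3 := norm_exp_w_le him m
    have h4 := hM t ht
    have h5 : (0:ℝ) ≤ ‖P₂.eval (τ - (τ₀ + (t:ℂ) * ((τ₀-1) - τ₀)))‖ := norm_nonneg _
    rw [hF₂_def]
    simp only [norm_mul]
    calc ‖a (m+1)‖ * (‖P₂.eval (τ - (τ₀ + (t:ℂ) * ((τ₀-1) - τ₀)))‖ *
          ‖Complex.exp (2*(Real.pi:ℂ)*Complex.I*((m:ℂ)+1) * (τ₀ + (t:ℂ) * ((τ₀-1) - τ₀)))‖)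
        ≤ ‖a (m+1)‖ * (M * r^(m+1)) := by
          apply mul_le_mul_of_nonneg_left _ (norm_nonneg _)
          exact mul_le_mul h4 h3 (norm_nonneg _) (le_trans h5 h4)
      _ = M * (‖a (m+1)‖ * r^(m+1)) := by ring
  -- interchanges
  have hS₁ : HasSum (fun m => segInt (F₁ m) τ₀ τ)
      (segInt (fun z => (τ - z)^n * f z) τ₀ τ) := by
    have hg₁ : (fun z => (τ - z)^n * f z) = fun z => ∑' m, F₁ m z := by
      funext z
      rw [hf z, ← tsum_mul_left]
      exact tsum_congr fun m => by rw [hF₁_def]; ring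
    rw [hg₁]
    exact segInt_hasSum τ₀ τ hF₁c (hsum_r.mul_left (‖τ - τ₀‖^n)) hb₁
  have hS₂ : HasSum (fun m => segInt (F₂ m) τ₀ (τ₀-1))
      (segInt (fun z => P₂.eval (τ - z) * f z) τ₀ (τ₀-1)) := by
    have hg₂ : (fun z => P₂.eval (τ - z) * f z) = fun z => ∑' m, F₂ m z := by
      funext z
      rw [hf z, ← tsum_mul_left]
      exact tsum_congr fun m => by rw [hF₂_def]; ring
    rw [hg₂]
    exact segInt_hasSum τ₀ (τ₀-1) hF₂c (hsum_r.mul_left M) hb₂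
  -- summability of the `fe` series
  have hA : Summable (fun m : ℕ => a (m+1) / ((m:ℂ)+1)^(n+1) *
      Complex.exp (2*(Real.pi:ℂ)*Complex.I*((m:ℂ)+1) * τ)) := by
    apply Summable.of_norm_bounded hsum_r
    intro m
    rw [norm_mul, norm_div, norm_pow]
    have h1 : (1:ℝ) ≤ ‖(m:ℂ)+1‖ := by
      have : ((m:ℂ)+1) = ((m+1 : ℕ) : ℂ) := by push_cast; ring
      rw [this, Complex.norm_natCast]
      exact_mod_cast Nat.one_le_iff_ne_zero.2 (Nat.succ_ne_zero m)
    have h2 : ‖a (m+1)‖ / ‖(m:ℂ)+1‖^(n+1) ≤ ‖a (m+1)‖ :=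
      div_le_self (norm_nonneg _) (one_le_pow₀ h1)
    have h3 : ‖Complex.exp (2*(Real.pi:ℂ)*Complex.I*((m:ℂ)+1) * τ)‖ ≤ r^(m+1) :=
      norm_exp_w_le (by rw [hδ_def]; exact min_le_right _ _) m
    exact mul_le_mul h2 h3 (norm_nonneg _) (norm_nonneg _)
  -- per-mode evaluation of the segment integrals
  have e₁ : ∀ m : ℕ, segInt (F₁ m) τ₀ τ
      = a (m+1) * (((n.factorial : ℂ) * ((2*(Real.pi:ℂ)*Complex.I*((m:ℂ)+1)) ^ (n+1))⁻¹)
          * Complex.exp (2*(Real.pi:ℂ)*Complex.I*((m:ℂ)+1) * τ)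
        - (Qp (2*(Real.pi:ℂ)*Complex.I*((m:ℂ)+1)) (n+1) P₁).eval (τ - τ₀)
          * Complex.exp (2*(Real.pi:ℂ)*Complex.I*((m:ℂ)+1) * τ₀)) := by
    intro m
    have h0 : F₁ m = fun z => a (m+1) *
        (P₁.eval (τ - z) * Complex.exp (2*(Real.pi:ℂ)*Complex.I*((m:ℂ)+1) * z)) := by
      funext z; rw [hF₁_def, hP₁_def]; simp
    rw [h0, segInt_const_mul, segInt_poly_exp P₁ (hwm m) hP₁ τ τ₀ τ, sub_self, hP₁_def,
      Qp_eval_zero]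
  have e₂ : ∀ m : ℕ, segInt (F₂ m) τ₀ (τ₀-1)
      = a (m+1) * (((n+1:ℕ) : ℂ)
          * (Qp (2*(Real.pi:ℂ)*Complex.I*((m:ℂ)+1)) (n+1) P₁).eval (τ - τ₀)
          * Complex.exp (2*(Real.pi:ℂ)*Complex.I*((m:ℂ)+1) * τ₀)) := by
    intro m
    have h0 : F₂ m = fun z => a (m+1) *
        (P₂.eval (τ - z) * Complex.exp (2*(Real.pi:ℂ)*Complex.I*((m:ℂ)+1) * z)) := by
      funext z; rw [hF₂_def]
    have hE : Complex.exp (2*(Real.pi:ℂ)*Complex.I*((m:ℂ)+1) * (τ₀ - 1))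
        = Complex.exp (2*(Real.pi:ℂ)*Complex.I*((m:ℂ)+1) * τ₀) := by
      rw [mul_sub, mul_one, Complex.exp_sub]
      have h1 : Complex.exp (2*(Real.pi:ℂ)*Complex.I*((m:ℂ)+1)) = 1 := by
        have h2 := Complex.exp_nat_mul_two_pi_mul_I (m+1)
        rw [show ((m+1 : ℕ) : ℂ) * (2*(Real.pi:ℂ)*Complex.I)
            = 2*(Real.pi:ℂ)*Complex.I*((m:ℂ)+1) from by push_cast; ring] at h2
        exact h2
      rw [h1, div_one]
    rw [h0, segInt_const_mul, segInt_poly_exp P₂ (hwm m) hP₂ τ τ₀ (τ₀-1), hE,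
      show τ - (τ₀ - 1) = (τ - τ₀) + 1 from by ring, hP₂_def, hP₁_def]
    have hkey := key_identity n (2*(Real.pi:ℂ)*Complex.I*((m:ℂ)+1)) (τ - τ₀)
    linear_combination (a (m+1) *
      Complex.exp (2*(Real.pi:ℂ)*Complex.I*((m:ℂ)+1) * τ₀)) * hkey
  -- the per-mode identity
  have hmode : ∀ m : ℕ,
      a (m+1) / ((m:ℂ)+1)^(n+1) * Complex.exp (2*(Real.pi:ℂ)*Complex.I*((m:ℂ)+1) * τ)
        - (2*(Real.pi:ℂ)*Complex.I)^(n+1) / (n.factorial : ℂ) * segInt (F₁ m) τ₀ τ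
      = (2*(Real.pi:ℂ)*Complex.I)^(n+1) / ((n+1).factorial : ℂ)
          * segInt (F₂ m) τ₀ (τ₀-1) := by
    intro m
    rw [e₁ m, e₂ m]
    have hfac : ((n+1).factorial : ℂ) = ((n+1:ℕ) : ℂ) * (n.factorial : ℂ) := by
      rw [Nat.factorial_succ]; push_cast; ring
    have hpow : (2*(Real.pi:ℂ)*Complex.I*((m:ℂ)+1))^(n+1)
        = (2*(Real.pi:ℂ)*Complex.I)^(n+1) * (((m:ℂ)+1))^(n+1) := mul_pow _ _ _
    have hfn : (n.factorial : ℂ) ≠ 0 := by exact_mod_cast n.factorial_ne_zero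
    have hm1 : ((m:ℂ)+1) ≠ 0 := by exact_mod_cast Nat.succ_ne_zero m
    have hπ : (2*(Real.pi:ℂ)*Complex.I) ≠ 0 := mul_ne_zero (mul_ne_zero two_ne_zero
      (Complex.ofReal_ne_zero.2 Real.pi_ne_zero)) Complex.I_ne_zero
    rw [hpow, hfac]
    have hn1 : ((n+1:ℕ) : ℂ) ≠ 0 := by exact_mod_cast Nat.succ_ne_zero n
    exact mode_alg _ _ _ _ hπ hm1 hfn hn1 n
  -- assemble everything
  have step : (∑' m : ℕ, a (m+1) / ((m:ℂ)+1)^(n+1) *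
        Complex.exp (2*(Real.pi:ℂ)*Complex.I*((m:ℂ)+1) * τ))
      - (2*(Real.pi:ℂ)*Complex.I)^(n+1) / (n.factorial : ℂ)
          * (∑' m : ℕ, segInt (F₁ m) τ₀ τ)
      = (2*(Real.pi:ℂ)*Complex.I)^(n+1) / ((n+1).factorial : ℂ)
          * (∑' m : ℕ, segInt (F₂ m) τ₀ (τ₀-1)) := by
    rw [← tsum_mul_left, ← tsum_mul_left, ← Summable.tsum_sub hA (hS₁.summable.mul_left _)]
    exact tsum_congr hmode
  rw [hfe τ]
  simp only [eichler, show n+2-1 = n+1 from rfl, show n+2-2 = n from rfl]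
  rw [show (fun z => Polynomial.aeval (τ - z) (Polynomial.bernoulli (n+1)) * f z)
      = fun z => P₂.eval (τ - z) * f z from funext fun z => by rw [hP₂eval]]
  rw [← hS₁.tsum_eq, ← hS₂.tsum_eq]
  exact step
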